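/- (Proposition 5) Let D ≥ 3 and let S'^{ijk} be a smooth tensor field on ℝ^D, antisymmetric in its last two indices (S'^{ijk} = −S'^{ikj}), satisfying ∂_k S'^{(ij)k} = 0 for all i,j (sum over k). Then there exist smooth tensor fields χ^{ijkr} on ℝ^D with χ^{ijkr} = χ^{i[jkr]} (totally antisymmetric in the last three indices) and η^{ijk} totally antisymmetric in all three indices, such that S'^{ijk} = ∂_r χ^{ijkr} + η^{ijk} (sum over r). -/

import Mathlib

/-- Partial derivative in the k-th Cartesian coordinate direction on ℝ^D. -/
noncomputable def pd {D : ℕ} (k : Fin D) (f : (Fin D → ℝ) → ℝ) : (Fin D → ℝ) → ℝ :=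
  fun x => fderiv ℝ f x (Pi.single k 1)


open MeasureTheory intervalIntegral Metric
set_option synthInstance.maxHeartbeats 1000000
set_option maxHeartbeats 1000000



abbrev XX (D : ℕ) := Fin D → ℝ

section pdlemmas
variable {D : ℕ}

lemma pd_contDiff {f : (Fin D → ℝ) → ℝ} (k : Fin D) (hf : ContDiff ℝ (⊤:ℕ∞) f) :
    ContDiff ℝ (⊤:ℕ∞) (pd k f) := by
  have h1 : ContDiff ℝ (⊤:ℕ∞) (fderiv ℝ f) := hf.fderiv_right (by simp)
  exact (ContinuousLinearMap.apply ℝ ℝ (Pi.single k 1)).contDiff.comp h1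

lemma pd_neg {f : (Fin D → ℝ) → ℝ} (k : Fin D) :
    pd k (fun x => - f x) = fun x => - pd k f x := by
  funext x; simp [pd, fderiv_neg]

lemma pd_sub {f g : (Fin D → ℝ) → ℝ} (k : Fin D) (x : Fin D → ℝ)
    (hf : DifferentiableAt ℝ f x) (hg : DifferentiableAt ℝ g x) :
    pd k (fun y => f y - g y) x = pd k f x - pd k g x := by
  simp [pd, fderiv_fun_sub hf hg]

lemma pd_add {f g : (Fin D → ℝ) → ℝ} (k : Fin D) (x : Fin D → ℝ)
    (hf : DifferentiableAt ℝ f x) (hg : DifferentiableAt ℝ g x) :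
    pd k (fun y => f y + g y) x = pd k f x + pd k g x := by
  simp [pd, fderiv_fun_add hf hg]

lemma pd_const_mul {f : (Fin D → ℝ) → ℝ} (k : Fin D) (x : Fin D → ℝ) (c : ℝ)
    (hf : DifferentiableAt ℝ f x) :
    pd k (fun y => c * f y) x = c * pd k f x := by
  simp [pd, fderiv_const_mul hf]

lemma pd_sum {ι : Type*} (s : Finset ι) (f : ι → (Fin D → ℝ) → ℝ) (k : Fin D) (x : Fin D → ℝ)
    (hf : ∀ i ∈ s, DifferentiableAt ℝ (f i) x) :
    pd k (fun y => ∑ i ∈ s, f i y) x = ∑ i ∈ s, pd k (f i) x := by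
  simp only [pd, fderiv_fun_sum hf]
  simp

lemma pd_congr {f g : (Fin D → ℝ) → ℝ} (k : Fin D) (h : ∀ x, f x = g x) :
    pd k f = pd k g := by
  have : f = g := funext h
  rw [this]

lemma pd_comm {f : (Fin D → ℝ) → ℝ} (hf : ContDiff ℝ (⊤:ℕ∞) f) (j k : Fin D) (x : Fin D → ℝ) :
    pd j (pd k f) x = pd k (pd j f) x := by
  have hdiff : ∀ y, HasFDerivAt f (fderiv ℝ f y) y := fun y =>
    (hf.differentiable (by simp) y).hasFDerivAt
  have h1 : ContDiff ℝ (⊤:ℕ∞) (fderiv ℝ f) := hf.fderiv_right (by simp)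
  have h2 : HasFDerivAt (fderiv ℝ f) (fderiv ℝ (fderiv ℝ f) x) x :=
    (h1.differentiable (by simp) x).hasFDerivAt
  have hsym := second_derivative_symmetric hdiff h2 (Pi.single j 1) (Pi.single k 1)
  have e1 : ∀ (v w : Fin D → ℝ) (y : Fin D → ℝ),
      fderiv ℝ (fun z => fderiv ℝ f z v) y w = fderiv ℝ (fderiv ℝ f) y w v := by
    intro v w y
    rw [fderiv_clm_apply (h1.differentiable (by simp) y) (differentiableAt_const v)]
    simp
  have ek : pd k f = fun z => fderiv ℝ f z (Pi.single k 1) := rfl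
  have ej : pd j f = fun z => fderiv ℝ f z (Pi.single j 1) := rfl
  show fderiv ℝ (pd k f) x (Pi.single j 1) = fderiv ℝ (pd j f) x (Pi.single k 1)
  rw [ek, ej, e1, e1]
  exact hsym

end pdlemmas

section param
variable {D : ℕ}

lemma partial_fderiv_contDiff {E : Type} [NormedAddCommGroup E] [NormedSpace ℝ E]
    (H : ℝ × XX D → E) (hH : ContDiff ℝ (⊤:ℕ∞) H) :
    ContDiff ℝ (⊤:ℕ∞) (fun p : ℝ × XX D => fderiv ℝ (fun y => H (p.1, y)) p.2) := by
  apply ContDiff.fderiv (f := fun (p : ℝ × XX D) (y : XX D) => H (p.1, y))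
    (g := fun p : ℝ × XX D => p.2) (m := (⊤:ℕ∞))
  · exact hH.comp (contDiff_fst.fst.prodMk contDiff_snd)
  · exact contDiff_snd
  · simp

lemma param_hasFDerivAt {E : Type} [NormedAddCommGroup E] [NormedSpace ℝ E] [CompleteSpace E]
    (H : ℝ × XX D → E) (hH : ContDiff ℝ (⊤:ℕ∞) H) (x₀ : XX D) :
    HasFDerivAt (fun x => ∫ t in (0:ℝ)..1, H (t, x))
      (∫ t in (0:ℝ)..1, fderiv ℝ (fun y => H (t, y)) x₀) x₀ := by
  have hHc : Continuous H := hH.continuous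
  have hF'c : Continuous (fun p : ℝ × XX D => fderiv ℝ (fun y => H (p.1, y)) p.2) :=
    (partial_fderiv_contDiff H hH).continuous
  obtain ⟨C, hC⟩ : ∃ C, ∀ p ∈ (Set.Icc (0:ℝ) 1) ×ˢ (closedBall x₀ 1),
      ‖fderiv ℝ (fun y => H (p.1, y)) p.2‖ ≤ C := by
    apply (isCompact_Icc.prod (isCompact_closedBall x₀ 1)).exists_bound_of_continuousOn
    exact hF'c.continuousOn
  have hdiffx : ∀ (t : ℝ) (x : XX D),
      HasFDerivAt (fun y => H (t, y)) (fderiv ℝ (fun y => H (t, y)) x) x := by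
    intro t x
    have : DifferentiableAt ℝ (fun y => H (t, y)) x :=
      (hH.differentiable (by simp) (t, x)).comp x
        ((differentiableAt_const t).prodMk differentiableAt_id)
    exact this.hasFDerivAt
  apply intervalIntegral.hasFDerivAt_integral_of_dominated_of_fderiv_le
    (F := fun x t => H (t, x)) (F' := fun x t => fderiv ℝ (fun y => H (t, y)) x)
    (s := ball x₀ 1) (bound := fun _ => |C|) (ball_mem_nhds x₀ one_pos)
  · filter_upwards with x
    exact (hHc.comp (continuous_id.prodMk continuous_const)).aestronglyMeasurable
  · exact (hHc.comp (continuous_id.prodMk continuous_const)).intervalIntegrable _ _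
  · exact (hF'c.comp (continuous_id.prodMk continuous_const)).aestronglyMeasurable
  · filter_upwards with t ht x hx
    refine le_trans (hC (t, x) ?_) (le_abs_self C)
    refine ⟨?_, ball_subset_closedBall hx⟩
    have : t ∈ Set.Ioc (0:ℝ) 1 := by
      simpa [Set.uIoc_of_le (by norm_num : (0:ℝ) ≤ 1)] using ht
    exact ⟨this.1.le, this.2⟩
  · exact intervalIntegrable_const
  · filter_upwards with t ht x hx
    exact hdiffx t x

lemma param_contDiff_nat (n : ℕ) :
    ∀ {E : Type} [NormedAddCommGroup E] [NormedSpace ℝ E] [CompleteSpace E]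
    (H : ℝ × XX D → E), ContDiff ℝ (⊤:ℕ∞) H →
      ContDiff ℝ (n:ℕ∞) (fun x => ∫ t in (0:ℝ)..1, H (t, x)) := by
  induction n with
  | zero =>
    intro E _ _ _ H hH
    have h0 : (((0:ℕ):ℕ∞) : WithTop ℕ∞) = 0 := by norm_cast
    rw [h0, contDiff_zero]
    exact intervalIntegral.continuous_parametric_intervalIntegral_of_continuous'
      (f := fun x t => H (t, x)) (by exact hH.continuous.comp continuous_swap) 0 1
  | succ n ih =>
    intro E _ _ _ H hH
    have hF' := partial_fderiv_contDiff H hH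
    have hfd : fderiv ℝ (fun x => ∫ t in (0:ℝ)..1, H (t, x)) =
        fun x => ∫ t in (0:ℝ)..1, fderiv ℝ (fun y => H (t, y)) x := by
      funext x
      exact (param_hasFDerivAt H hH x).fderiv
    have key : ContDiff ℝ (((n:ℕ∞) : WithTop ℕ∞) + 1) (fun x => ∫ t in (0:ℝ)..1, H (t, x)) := by
      rw [contDiff_succ_iff_fderiv]
      refine ⟨fun x => (param_hasFDerivAt H hH x).differentiableAt, ?_, ?_⟩
      · intro h
        exfalso
        exact (by simp : ((n:ℕ∞) : WithTop ℕ∞) ≠ ⊤) h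
      · rw [hfd]
        exact ih (fun p : ℝ × XX D => fderiv ℝ (fun y => H (p.1, y)) p.2) hF'
    have hcast : (((n+1:ℕ):ℕ∞) : WithTop ℕ∞) = ((n:ℕ∞) : WithTop ℕ∞) + 1 := by norm_cast
    rw [hcast]
    exact key

lemma param_contDiff {E : Type} [NormedAddCommGroup E] [NormedSpace ℝ E] [CompleteSpace E]
    (H : ℝ × XX D → E) (hH : ContDiff ℝ (⊤:ℕ∞) H) :
    ContDiff ℝ (⊤:ℕ∞) (fun x => ∫ t in (0:ℝ)..1, H (t, x)) := by
  rw [contDiff_infty]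
  intro n
  exact param_contDiff_nat n H hH

lemma param_pd (H : ℝ × XX D → ℝ) (hH : ContDiff ℝ (⊤:ℕ∞) H) (r : Fin D) (x : XX D) :
    pd r (fun z => ∫ t in (0:ℝ)..1, H (t, z)) x
      = ∫ t in (0:ℝ)..1, fderiv ℝ (fun y => H (t, y)) x (Pi.single r 1) := by
  have h := (param_hasFDerivAt H hH x).fderiv
  show (fderiv ℝ (fun z => ∫ t in (0:ℝ)..1, H (t, z)) x) (Pi.single r 1) = _
  rw [h]
  have hF'c : Continuous (fun p : ℝ × XX D => fderiv ℝ (fun y => H (p.1, y)) p.2) :=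
    (partial_fderiv_contDiff H hH).continuous
  have hint : IntervalIntegrable (fun t => fderiv ℝ (fun y => H (t, y)) x) volume 0 1 :=
    (hF'c.comp (continuous_id.prodMk continuous_const)).intervalIntegrable _ _
  exact ((ContinuousLinearMap.apply ℝ ℝ (Pi.single r 1)).intervalIntegral_comp_comm hint).symm

end param

section pot
variable {D : ℕ}

noncomputable def potH (m : ℕ) (F : Fin D → Fin D → XX D → ℝ) (j k r : Fin D) :
    ℝ × XX D → ℝ :=
  fun p => p.1^m * (p.2 j * F k r (p.1 • p.2) + p.2 k * F r j (p.1 • p.2)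
    + p.2 r * F j k (p.1 • p.2))

noncomputable def pot (m : ℕ) (F : Fin D → Fin D → XX D → ℝ) (j k r : Fin D) :
    XX D → ℝ :=
  fun x => ∫ t in (0:ℝ)..1, potH m F j k r (t, x)

lemma potH_contDiff (m : ℕ) (F : Fin D → Fin D → XX D → ℝ)
    (hs : ∀ a b, ContDiff ℝ (⊤:ℕ∞) (F a b)) (j k r : Fin D) :
    ContDiff ℝ (⊤:ℕ∞) (potH m F j k r) := by
  have hsmul : ContDiff ℝ (⊤:ℕ∞) (fun p : ℝ × XX D => p.1 • p.2) :=
    contDiff_fst.smul contDiff_snd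
  have hco : ∀ a : Fin D, ContDiff ℝ (⊤:ℕ∞) (fun p : ℝ × XX D => p.2 a) := by
    intro a
    exact ((ContinuousLinearMap.proj a : XX D →L[ℝ] ℝ).contDiff).comp contDiff_snd
  have hterm : ∀ (a b c : Fin D), ContDiff ℝ (⊤:ℕ∞)
      (fun p : ℝ × XX D => p.2 a * F b c (p.1 • p.2)) := by
    intro a b c
    exact (hco a).mul ((hs b c).comp hsmul)
  exact (contDiff_fst.pow m).mul (((hterm j k r).add (hterm k r j)).add (hterm r j k))

lemma pot_contDiff (m : ℕ) (F : Fin D → Fin D → XX D → ℝ)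
    (hs : ∀ a b, ContDiff ℝ (⊤:ℕ∞) (F a b)) (j k r : Fin D) :
    ContDiff ℝ (⊤:ℕ∞) (pot m F j k r) :=
  param_contDiff _ (potH_contDiff m F hs j k r)

lemma pot_anti1 (m : ℕ) (F : Fin D → Fin D → XX D → ℝ)
    (ha : ∀ a b x, F a b x = - F b a x) (j k r : Fin D) (x : XX D) :
    pot m F j k r x = - pot m F k j r x := by
  show (∫ t in (0:ℝ)..1, potH m F j k r (t, x)) = - ∫ t in (0:ℝ)..1, potH m F k j r (t, x)
  rw [← intervalIntegral.integral_neg]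
  apply intervalIntegral.integral_congr
  intro t _
  show potH m F j k r (t,x) = - potH m F k j r (t,x)
  simp only [potH]
  rw [ha k r (t • x), ha r j (t • x), ha j k (t • x)]
  ring

lemma pot_anti2 (m : ℕ) (F : Fin D → Fin D → XX D → ℝ)
    (ha : ∀ a b x, F a b x = - F b a x) (j k r : Fin D) (x : XX D) :
    pot m F j k r x = - pot m F j r k x := by
  show (∫ t in (0:ℝ)..1, potH m F j k r (t, x)) = - ∫ t in (0:ℝ)..1, potH m F j r k (t, x)
  rw [← intervalIntegral.integral_neg]
  apply intervalIntegral.integral_congr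
  intro t _
  show potH m F j k r (t,x) = - potH m F j r k (t,x)
  simp only [potH]
  rw [ha k r (t • x), ha r j (t • x), ha j k (t • x)]
  ring

end pot

section potdiv
variable {D : ℕ}

lemma smul_hasFDerivAt (t : ℝ) (x : XX D) :
    HasFDerivAt (fun y : XX D => t • y) (t • ContinuousLinearMap.id ℝ (XX D)) x := by
  have h := (t • ContinuousLinearMap.id ℝ (XX D)).hasFDerivAt (x := x)
  simpa using h

lemma term_hasFDerivAt (f : XX D → ℝ) (hf : ContDiff ℝ (⊤:ℕ∞) f) (a : Fin D) (t : ℝ) (x : XX D) :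
    HasFDerivAt (fun y : XX D => y a * f (t • y))
      (x a • ((fderiv ℝ f (t • x)).comp (t • ContinuousLinearMap.id ℝ (XX D)))
        + f (t • x) • (ContinuousLinearMap.proj a : XX D →L[ℝ] ℝ)) x := by
  have hP : HasFDerivAt (fun y : XX D => y a)
      (ContinuousLinearMap.proj a : XX D →L[ℝ] ℝ) x :=
    (ContinuousLinearMap.proj a : XX D →L[ℝ] ℝ).hasFDerivAt
  have hQ : HasFDerivAt (fun y : XX D => f (t • y))
      ((fderiv ℝ f (t • x)).comp (t • ContinuousLinearMap.id ℝ (XX D))) x :=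
    ((hf.differentiable (by simp) (t • x)).hasFDerivAt).comp x (smul_hasFDerivAt t x)
  exact hP.mul hQ

lemma term_pd (f : XX D → ℝ) (hf : ContDiff ℝ (⊤:ℕ∞) f) (a r : Fin D) (t : ℝ) (x : XX D) :
    fderiv ℝ (fun y : XX D => y a * f (t • y)) x (Pi.single r 1)
      = (Pi.single r 1 : XX D) a * f (t • x) + x a * (t * pd r f (t • x)) := by
  rw [(term_hasFDerivAt f hf a t x).fderiv]
  simp [pd, ContinuousLinearMap.smul_apply, smul_eq_mul]
  ring

lemma potH_pd (m : ℕ) (F : Fin D → Fin D → XX D → ℝ)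
    (hs : ∀ a b, ContDiff ℝ (⊤:ℕ∞) (F a b)) (j k r : Fin D) (t : ℝ) (x : XX D) :
    fderiv ℝ (fun y => potH m F j k r (t, y)) x (Pi.single r 1)
      = t^m * ((Pi.single r 1 : XX D) j * F k r (t • x) + x j * (t * pd r (F k r) (t • x))
          + ((Pi.single r 1 : XX D) k * F r j (t • x) + x k * (t * pd r (F r j) (t • x)))
          + (((Pi.single r 1 : XX D) r * F j k (t • x)) + x r * (t * pd r (F j k) (t • x)))) := by
  have h1 := term_hasFDerivAt (F k r) (hs k r) j t x
  have h2 := term_hasFDerivAt (F r j) (hs r j) k t x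
  have h3 := term_hasFDerivAt (F j k) (hs j k) r t x
  have h := (((h1.add h2).add h3).const_mul (t^m)).fderiv
  have he : (fun y : XX D => potH m F j k r (t, y)) =
      fun y : XX D => t^m * ((y j * F k r (t • y) + y k * F r j (t • y)) + y r * F j k (t • y)) := by
    funext y
    simp only [potH]
  simp only [Pi.add_apply] at h
  rw [he, h]
  simp [pd, ContinuousLinearMap.smul_apply, smul_eq_mul]
  ring

end potdiv

section potdiv2
variable {D : ℕ}

lemma single_sum_eval (G : Fin D → ℝ) (a : Fin D) :
    ∑ r, (Pi.single r (1:ℝ) : XX D) a * G r = G a := by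
  have h : ∀ r : Fin D, (Pi.single r (1:ℝ) : XX D) a * G r = if a = r then G r else 0 := by
    intro r
    rw [Pi.single_apply]
    split <;> simp
  rw [Finset.sum_congr rfl (fun r _ => h r)]
  simp

lemma fderiv_eq_sum_pd (f : XX D → ℝ) (y x : XX D) :
    fderiv ℝ f y x = ∑ r, x r * pd r f y := by
  have hx : x = ∑ r, x r • (Pi.single r (1:ℝ) : XX D) := by
    have h1 : ∀ r, x r • (Pi.single r (1:ℝ) : XX D) = Pi.single r (x r) := by
      intro r
      funext a
      simp [Pi.single_apply, mul_ite]
    rw [Finset.sum_congr rfl (fun r _ => h1 r)]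
    exact (Finset.univ_sum_single x).symm
  conv_lhs => rw [hx]
  rw [map_sum]
  simp [pd, smul_eq_mul]

lemma pot_div (hD : 3 ≤ D) (F : Fin D → Fin D → XX D → ℝ)
    (hs : ∀ a b, ContDiff ℝ (⊤:ℕ∞) (F a b))
    (ha : ∀ a b x, F a b x = - F b a x)
    (hd : ∀ a x, ∑ b, pd b (F a b) x = 0) (j k : Fin D) (x : XX D) :
    ∑ r, pd r (pot (D-3) F j k r) x = F j k x := by
  set m := D - 3 with hm
  -- divergence of F in the first slot
  have hd' : ∀ (b : Fin D) (y : XX D), ∑ r, pd r (fun z => F r b z) y = 0 := by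
    intro b y
    have h1 : ∀ r : Fin D, pd r (fun z => F r b z) y = - pd r (F b r) y := by
      intro r
      have : (fun z => F r b z) = fun z => - F b r z := by
        funext z
        rw [ha b r z]
        ring
      rw [pd_congr r (fun z => congrFun this z), pd_neg]
    rw [Finset.sum_congr rfl (fun r _ => h1 r)]
    rw [Finset.sum_neg_distrib]
    rw [hd b y]
    ring
  -- rewrite each pd as an integral
  have hpd : ∀ r : Fin D, pd r (pot m F j k r) x
      = ∫ t in (0:ℝ)..1, fderiv ℝ (fun y => potH m F j k r (t, y)) x (Pi.single r 1) :=
    fun r => param_pd (potH m F j k r) (potH_contDiff m F hs j k r) r x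
  have hcont : ∀ r : Fin D, Continuous (fun t : ℝ =>
      fderiv ℝ (fun y => potH m F j k r (t, y)) x (Pi.single r 1)) := by
    intro r
    have h1 : Continuous (fun p : ℝ × XX D => fderiv ℝ (fun y => potH m F j k r (p.1, y)) p.2) :=
      (partial_fderiv_contDiff _ (potH_contDiff m F hs j k r)).continuous
    have h2 : Continuous (fun t : ℝ => fderiv ℝ (fun y => potH m F j k r (t, y)) x) :=
      h1.comp (continuous_id.prodMk continuous_const)
    exact (ContinuousLinearMap.apply ℝ ℝ ((Pi.single r 1 : XX D))).continuous.comp h2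
  rw [Finset.sum_congr rfl (fun r _ => hpd r)]
  rw [← intervalIntegral.integral_finset_sum (fun r _ => (hcont r).intervalIntegrable 0 1)]
  -- pointwise simplification of the summed integrand
  have hsum : ∀ t : ℝ, (∑ r, fderiv ℝ (fun y => potH m F j k r (t, y)) x (Pi.single r 1))
      = ((D-2:ℕ):ℝ) * t^(D-3) * F j k (t • x) + t^(D-2) * (fderiv ℝ (F j k) (t • x) x) := by
    intro t
    rw [Finset.sum_congr rfl (fun r _ => potH_pd m F hs j k r t x)]
    rw [← Finset.mul_sum]
    simp only [Finset.sum_add_distrib]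
    rw [single_sum_eval (fun r => F k r (t • x)) j]
    rw [single_sum_eval (fun r => F r j (t • x)) k]
    -- the ∑ x j * (t * pd ...) terms
    have e2 : (∑ r, x j * (t * pd r (F k r) (t • x))) = 0 := by
      rw [← Finset.mul_sum, ← Finset.mul_sum, hd k (t • x)]
      ring
    have e3 : (∑ r, x k * (t * pd r (F r j) (t • x))) = 0 := by
      rw [← Finset.mul_sum, ← Finset.mul_sum, hd' j (t • x)]
      ring
    have e4 : (∑ r : Fin D, (Pi.single r (1:ℝ) : XX D) r * F j k (t • x)) = (D:ℝ) * F j k (t • x) := by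
      simp only [Pi.single_eq_same, one_mul]
      rw [Finset.sum_const, Finset.card_univ, Fintype.card_fin, nsmul_eq_mul]
    have e5 : (∑ r, x r * (t * pd r (F j k) (t • x))) = t * (fderiv ℝ (F j k) (t • x) x) := by
      have h1 : ∀ r : Fin D, x r * (t * pd r (F j k) (t • x)) = t * (x r * pd r (F j k) (t • x)) :=
        fun r => by ring
      rw [Finset.sum_congr rfl (fun r _ => h1 r), ← Finset.mul_sum,
        fderiv_eq_sum_pd (F j k) (t • x) x]
    rw [e2, e3, e4, e5]
    rw [ha k j (t • x)]
    have hc : ((D-2:ℕ):ℝ) = (D:ℝ) - 2 := by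
      rw [Nat.cast_sub (by omega : 2 ≤ D)]
      norm_num
    have hD2 : D - 2 = m + 1 := by omega
    rw [hc, hD2, pow_succ, ← hm]
    ring
  rw [intervalIntegral.integral_congr (fun t _ => hsum t)]
  -- FTC
  have c1 : Continuous fun t : ℝ => t • x := continuous_id.smul continuous_const
  have c2 : Continuous fun t : ℝ => F j k (t • x) := (hs j k).continuous.comp c1
  have csm : ContDiff ℝ (⊤:ℕ∞) (fderiv ℝ (F j k)) := (hs j k).fderiv_right (by simp)
  have c3 : Continuous fun t : ℝ => fderiv ℝ (F j k) (t • x) x :=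
    (ContinuousLinearMap.apply ℝ ℝ x).continuous.comp ((csm.continuous).comp c1)
  have hint : IntervalIntegrable (fun t : ℝ =>
      ((D-2:ℕ):ℝ) * t^(D-3) * F j k (t • x) + t^(D-2) * (fderiv ℝ (F j k) (t • x) x))
      MeasureTheory.volume 0 1 := by
    apply Continuous.intervalIntegrable
    exact ((continuous_const.mul (continuous_pow (D-3))).mul c2).add
      ((continuous_pow (D-2)).mul c3)
  have hder : ∀ t ∈ Set.uIcc (0:ℝ) 1, HasDerivAt (fun s : ℝ => s^(D-2) * F j k (s • x))
      (((D-2:ℕ):ℝ) * t^(D-3) * F j k (t • x) + t^(D-2) * (fderiv ℝ (F j k) (t • x) x)) t := by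
    intro t _
    have h1 : HasDerivAt (fun s : ℝ => s^(D-2)) (((D-2:ℕ):ℝ) * t^(D-2-1)) t := hasDerivAt_pow _ _
    have he : D-2-1 = D-3 := by omega
    rw [he] at h1
    have hin : HasDerivAt (fun s : ℝ => s • x) x t := by
      simpa using (hasDerivAt_id t).smul_const x
    have h2 : HasDerivAt (fun s : ℝ => F j k (s • x)) (fderiv ℝ (F j k) (t • x) x) t := by
      have hdf := ((hs j k).differentiable (by simp) (t • x)).hasFDerivAt
      exact hdf.comp_hasDerivAt t hin
    exact h1.mul h2
  rw [intervalIntegral.integral_eq_sub_of_hasDerivAt hder hint]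
  have h0 : (0:ℝ)^(D-2) = 0 := zero_pow (by omega : D - 2 ≠ 0)
  simp [h0]

end potdiv2

/-- Proposition 5: a smooth tensor field S'^{ijk} = −S'^{ikj} with
∂_k S'^{(ij)k} = 0 is of the form S'^{ijk} = ∂_r χ^{ijkr} + η^{ijk} with
χ^{ijkr} = χ^{i[jkr]} and η totally antisymmetric. -/
theorem stmt_13 (D : ℕ) (hD : 3 ≤ D)
    (S' : Fin D → Fin D → Fin D → (Fin D → ℝ) → ℝ)
    (hsmooth : ∀ i j k, ContDiff ℝ (⊤ : ℕ∞) (S' i j k))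
    (hanti : ∀ i j k x, S' i j k x = - S' i k j x)
    (hdiv : ∀ i j x, ∑ k, pd k (fun y => (1/2 : ℝ) * (S' i j k y + S' j i k y)) x = 0) :
    ∃ χ : Fin D → Fin D → Fin D → Fin D → (Fin D → ℝ) → ℝ,
    ∃ η : Fin D → Fin D → Fin D → (Fin D → ℝ) → ℝ,
      (∀ i j k r, ContDiff ℝ (⊤ : ℕ∞) (χ i j k r)) ∧
      (∀ i j k, ContDiff ℝ (⊤ : ℕ∞) (η i j k)) ∧
      (∀ i j k r x, χ i j k r x = - χ i k j r x) ∧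
      (∀ i j k r x, χ i j k r x = - χ i j r k x) ∧
      (∀ i j k x, η i j k x = - η j i k x) ∧
      (∀ i j k x, η i j k x = - η i k j x) ∧
      (∀ i j k x, S' i j k x = (∑ r, pd r (χ i j k r) x) + η i j k x) := by
  have dA : ∀ (f : XX D → ℝ), ContDiff ℝ (⊤:ℕ∞) f → ∀ y, DifferentiableAt ℝ f y :=
    fun f hf y => (hf.differentiable (by simp)).differentiableAt
  -- the antisymmetric part of S' in the first two indices
  set Bf : Fin D → Fin D → Fin D → XX D → ℝ :=
    fun i j k => fun x => (1/2 : ℝ) * (S' i j k x - S' j i k x) with hBf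
  have hBs : ∀ i j k, ContDiff ℝ (⊤:ℕ∞) (Bf i j k) :=
    fun i j k => contDiff_const.mul ((hsmooth i j k).sub (hsmooth j i k))
  -- half-sum (symmetric part)
  set Af : Fin D → Fin D → Fin D → XX D → ℝ :=
    fun i j k => fun x => (1/2 : ℝ) * (S' i j k x + S' j i k x) with hAf
  have hAs : ∀ i j k, ContDiff ℝ (⊤:ℕ∞) (Af i j k) :=
    fun i j k => contDiff_const.mul ((hsmooth i j k).add (hsmooth j i k))
  -- F tensor
  set Fm : Fin D → Fin D → XX D → ℝ :=
    fun i j => fun x => ∑ k, pd k (Bf i j k) x with hFm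
  have hFs : ∀ i j, ContDiff ℝ (⊤:ℕ∞) (Fm i j) := by
    intro i j
    exact ContDiff.sum (fun k _ => pd_contDiff k (hBs i j k))
  -- conservation identity from hdiv
  have hcons : ∀ i j y, (∑ k, pd k (S' i j k) y) + (∑ k, pd k (S' j i k) y) = 0 := by
    intro i j y
    have h0 := hdiv i j y
    have h1 : ∀ k : Fin D, pd k (fun z => (1/2 : ℝ) * (S' i j k z + S' j i k z)) y
        = (1/2 : ℝ) * (pd k (S' i j k) y + pd k (S' j i k) y) := by
      intro k
      rw [pd_const_mul k y _ ((dA _ (hsmooth i j k) y).fun_add (dA _ (hsmooth j i k) y)),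
        pd_add k y (dA _ (hsmooth i j k) y) (dA _ (hsmooth j i k) y)]
    rw [Finset.sum_congr rfl (fun k _ => h1 k), ← Finset.mul_sum, Finset.sum_add_distrib] at h0
    linarith
  -- div of S' in last slot equals Fm
  have hFB : ∀ i j y, (∑ k, pd k (S' i j k) y) = Fm i j y := by
    intro i j y
    have h1 : ∀ k : Fin D, pd k (S' i j k) y = pd k (Af i j k) y + pd k (Bf i j k) y := by
      intro k
      have he : S' i j k = fun z => Af i j k z + Bf i j k z := by
        funext z
        simp only [hAf, hBf]
        ring
      rw [pd_congr k (fun z => congrFun he z), pd_add k y (dA _ (hAs i j k) y) (dA _ (hBs i j k) y)]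
    rw [Finset.sum_congr rfl (fun k _ => h1 k), Finset.sum_add_distrib]
    have h2 : ∑ k, pd k (Af i j k) y = 0 := hdiv i j y
    rw [h2]
    simp [hFm]
  -- antisymmetry of Fm
  have hFanti : ∀ i j y, Fm i j y = - Fm j i y := by
    intro i j y
    have h1 : ∀ k : Fin D, pd k (Bf i j k) y = - pd k (Bf j i k) y := by
      intro k
      have he : Bf i j k = fun z => - Bf j i k z := by
        funext z
        simp only [hBf]
        ring
      rw [pd_congr k (fun z => congrFun he z), pd_neg]
    simp only [hFm]
    rw [Finset.sum_congr rfl (fun k _ => h1 k), Finset.sum_neg_distrib]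
  -- divergence-freeness of Fm
  have hFdiv : ∀ i y, ∑ j, pd j (Fm i j) y = 0 := by
    intro i y
    -- T1 = 0
    have hT1 : (∑ j, ∑ k, pd j (pd k (S' i j k)) y) = 0 := by
      have h1 : ∀ j k : Fin D, pd j (pd k (S' i j k)) y = - pd k (pd j (S' i k j)) y := by
        intro j k
        have he : S' i j k = fun z => - S' i k j z := by
          funext z
          rw [hanti i j k z]
        rw [pd_congr k (fun z => congrFun he z), pd_neg]
        have : pd j (fun x => - pd k (S' i k j) x) y = - pd j (pd k (S' i k j)) y := by
          rw [pd_neg]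
        rw [this, pd_comm (hsmooth i k j) j k y]
      have h2 : (∑ j, ∑ k, pd j (pd k (S' i j k)) y)
          = - ∑ j, ∑ k, pd k (pd j (S' i k j)) y := by
        rw [← Finset.sum_neg_distrib]
        apply Finset.sum_congr rfl
        intro j _
        rw [← Finset.sum_neg_distrib]
        exact Finset.sum_congr rfl (fun k _ => h1 j k)
      have h7 : (∑ j, ∑ k, pd k (pd j (S' i k j)) y) = ∑ j, ∑ k, pd j (pd k (S' i j k)) y :=
        Finset.sum_comm
      rw [h7] at h2
      linarith
    -- rewrite each term
    have h3 : ∀ j : Fin D, pd j (Fm i j) y = ∑ k, pd j (pd k (S' i j k)) y := by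
      intro j
      have he : Fm i j = fun z => ∑ k, pd k (S' i j k) z := by
        funext z
        have := hcons i j z
        have hB : Fm i j z = ∑ k, pd k (Bf i j k) z := rfl
        have h4 : ∀ k : Fin D, pd k (Bf i j k) z
            = (1/2 : ℝ) * (pd k (S' i j k) z - pd k (S' j i k) z) := by
          intro k
          have he2 : Bf i j k = fun w => (1/2 : ℝ) * (S' i j k w - S' j i k w) := rfl
          rw [pd_congr k (fun w => congrFun he2 w),
            pd_const_mul k z _ ((dA _ (hsmooth i j k) z).fun_sub (dA _ (hsmooth j i k) z)),
            pd_sub k z (dA _ (hsmooth i j k) z) (dA _ (hsmooth j i k) z)]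
        rw [hB, Finset.sum_congr rfl (fun k _ => h4 k), ← Finset.mul_sum]
        rw [Finset.sum_sub_distrib]
        have h5 : ∑ k, pd k (S' j i k) z = - ∑ k, pd k (S' i j k) z := by linarith
        rw [h5]
        ring
      rw [pd_congr j (fun z => congrFun he z)]
      rw [pd_sum Finset.univ (fun k => pd k (S' i j k)) j y
        (fun k _ => dA _ (pd_contDiff k (hsmooth i j k)) y)]
    rw [Finset.sum_congr rfl (fun j _ => h3 j)]
    exact hT1
  -- η
  set η : Fin D → Fin D → Fin D → XX D → ℝ := fun i j k => pot (D-3) Fm i j k with hη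
  have hηs : ∀ i j k, ContDiff ℝ (⊤:ℕ∞) (η i j k) :=
    fun i j k => pot_contDiff (D-3) Fm hFs i j k
  have hηdiv : ∀ i j x, ∑ r, pd r (η i j r) x = Fm i j x := by
    intro i j x
    exact pot_div hD Fm hFs (fun a b z => hFanti a b z) (fun a z => hFdiv a z) i j x
  -- M tensor
  set Mm : Fin D → Fin D → Fin D → XX D → ℝ :=
    fun i j k => fun x => S' i j k x - η i j k x with hMm
  have hMs : ∀ i j k, ContDiff ℝ (⊤:ℕ∞) (Mm i j k) :=
    fun i j k => (hsmooth i j k).sub (hηs i j k)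
  have hMa : ∀ i a b x, Mm i a b x = - Mm i b a x := by
    intro i a b x
    simp only [hMm, hη]
    rw [hanti i a b x, pot_anti2 (D-3) Fm (fun a b z => hFanti a b z) i a b x]
    ring
  have hMd : ∀ i a x, ∑ b, pd b (Mm i a b) x = 0 := by
    intro i a x
    have h1 : ∀ b : Fin D, pd b (Mm i a b) x = pd b (S' i a b) x - pd b (η i a b) x := by
      intro b
      exact pd_sub b x (dA _ (hsmooth i a b) x) (dA _ (hηs i a b) x)
    rw [Finset.sum_congr rfl (fun b _ => h1 b), Finset.sum_sub_distrib, hFB i a x, hηdiv i a x]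
    ring
  -- χ
  refine ⟨fun i j k r => pot (D-3) (Mm i) j k r, η, ?_, hηs, ?_, ?_, ?_, ?_, ?_⟩
  · intro i j k r
    exact pot_contDiff (D-3) (Mm i) (fun a b => hMs i a b) j k r
  · intro i j k r x
    exact pot_anti1 (D-3) (Mm i) (fun a b z => hMa i a b z) j k r x
  · intro i j k r x
    exact pot_anti2 (D-3) (Mm i) (fun a b z => hMa i a b z) j k r x
  · intro i j k x
    exact pot_anti1 (D-3) Fm (fun a b z => hFanti a b z) i j k x
  · intro i j k x
    exact pot_anti2 (D-3) Fm (fun a b z => hFanti a b z) i j k x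
  · intro i j k x
    have h1 : ∑ r, pd r (pot (D-3) (Mm i) j k r) x = Mm i j k x :=
      pot_div hD (Mm i) (fun a b => hMs i a b) (fun a b z => hMa i a b z)
        (fun a z => hMd i a z) j k x
    rw [h1]
    simp only [hMm]
    ring
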